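/- Let g(z) = Σ_{j=1}^t e^{a_j z + b_j} with real frequencies a_1 < ... < a_t, t ≥ 2, and b_j ∈ ℂ, with δ(g) := min_{p≠q}|a_p − a_q|. Let w_min := min Trop(g) and w_max := max Trop(g). Then the real part of every complex root of g lies in the open interval (w_min − log 2/δ(g), w_max + log 2/δ(g)). -/

import Mathlib

noncomputable section

/-- The Archimedean tropical variety of a univariate exponential sum. -/
def Trop (t : ℕ) (a : Fin t → ℝ) (b : Fin t → ℂ) : Set ℝ :=
  {w | ∃ j k : Fin t, j ≠ k ∧
    (∀ i : Fin t, a i * w + (b i).re ≤ a j * w + (b j).re) ∧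
    a j * w + (b j).re = a k * w + (b k).re}

lemma gap_lemma (t : ℕ) (a : Fin t → ℝ) (ha : StrictMono a) (δ : ℝ)
    (hδ : δ ∈ lowerBounds {d : ℝ | ∃ p q : Fin t, p ≠ q ∧ d = |a p - a q|}) :
    ∀ (n : ℕ) (j k : Fin t), j.val + n = k.val → (n : ℝ) * δ ≤ a k - a j := by
  intro n
  induction n with
  | zero =>
    intro j k h
    have : j = k := Fin.ext (by omega)
    simp [this]
  | succ n ih =>
    intro j k h
    have hj1 : j.val + 1 < t := by omega
    set j' : Fin t := ⟨j.val + 1, hj1⟩ with hj'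
    have hne : j' ≠ j := by simp [Fin.ext_iff, hj']
    have hlt : a j < a j' := ha (by simp [Fin.lt_def, hj'])
    have h1 : δ ≤ a j' - a j := by
      have := hδ ⟨j', j, hne, rfl⟩
      rwa [abs_of_pos (by linarith)] at this
    have h2 := ih j' k (by simp [hj']; omega)
    push_cast
    push_cast at h2
    linarith

lemma key_lemma (t : ℕ) (a : Fin t → ℝ) (b : Fin t → ℂ) (ζ : ℂ)
    (hζ : ∑ j, Complex.exp (a j * ζ + b j) = 0)
    (T : Fin t) (d : Fin t → ℕ) (hd : Function.Injective d) (hdT : d T = 0)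
    (hdlt : ∀ j, d j < t)
    (h : ∀ j, Real.log 2 * d j ≤ (a T * ζ.re + (b T).re) - (a j * ζ.re + (b j).re)) :
    False := by
  set c : Fin t → ℝ := fun j => a j * ζ.re + (b j).re with hc
  have habs : ∀ j, ‖Complex.exp (a j * ζ + b j)‖ = Real.exp (c j) := by
    intro j
    rw [Complex.norm_exp]
    congr 1
    simp [hc, Complex.add_re, Complex.mul_re]
  have hsplit : Complex.exp (a T * ζ + b T)
      = - ∑ j ∈ Finset.univ.erase T, Complex.exp (a j * ζ + b j) := by
    have := Finset.add_sum_erase Finset.univ (fun j => Complex.exp (a j * ζ + b j))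
      (Finset.mem_univ T)
    rw [hζ] at this
    linear_combination this
  have hTle : Real.exp (c T) ≤ ∑ j ∈ Finset.univ.erase T, Real.exp (c j) := by
    calc Real.exp (c T) = ‖Complex.exp (a T * ζ + b T)‖ := (habs T).symm
    _ = ‖∑ j ∈ Finset.univ.erase T, Complex.exp (a j * ζ + b j)‖ := by
        rw [hsplit, norm_neg]
    _ ≤ ∑ j ∈ Finset.univ.erase T, ‖Complex.exp (a j * ζ + b j)‖ :=
        norm_sum_le _ _
    _ = _ := by simp [habs]
  have hterm : ∀ j, Real.exp (c j) ≤ Real.exp (c T) * (1/2 : ℝ) ^ (d j) := by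
    intro j
    have h1 : Real.exp (c j) ≤ Real.exp (c T - Real.log 2 * d j) :=
      Real.exp_le_exp.2 (by have := h j; simp only [hc]; linarith)
    have h2 : Real.exp (c T - Real.log 2 * d j)
        = Real.exp (c T) * (1/2 : ℝ) ^ (d j) := by
      rw [Real.exp_sub]
      have : Real.exp (Real.log 2 * d j) = 2 ^ (d j) := by
        rw [mul_comm, Real.exp_nat_mul, Real.exp_log (by norm_num : (0:ℝ) < 2)]
      rw [this, div_eq_mul_inv]
      congr 1
      rw [one_div, inv_pow]
    linarith [h1, h2.le, h2.ge]
  -- sum of powers bound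
  have hpos : (0:ℝ) < Real.exp (c T) := Real.exp_pos _
  have hsum2 : ∑ j ∈ Finset.univ.erase T, Real.exp (c j)
      ≤ Real.exp (c T) * ∑ j ∈ Finset.univ.erase T, (1/2 : ℝ) ^ (d j) := by
    rw [Finset.mul_sum]
    exact Finset.sum_le_sum (fun j _ => hterm j)
  have himg : ∑ j ∈ Finset.univ.erase T, (1/2 : ℝ) ^ (d j)
      = ∑ k ∈ (Finset.univ.erase T).image d, (1/2 : ℝ) ^ k :=
    (Finset.sum_image (fun x _ y _ hxy => hd hxy)).symm
  have hsub : (Finset.univ.erase T).image d ⊆ (Finset.range t).erase 0 := by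
    intro k hk
    obtain ⟨j, hj, rfl⟩ := Finset.mem_image.1 hk
    have hjT : j ≠ T := Finset.ne_of_mem_erase hj
    refine Finset.mem_erase.2 ⟨?_, Finset.mem_range.2 (hdlt j)⟩
    intro h0
    exact hjT (hd (h0.trans hdT.symm))
  have ht0 : 0 < t := T.pos
  have hgeom : ∑ k ∈ (Finset.range t).erase 0, (1/2 : ℝ) ^ k < 1 := by
    have h1 : ∑ k ∈ Finset.range t, (1/2 : ℝ) ^ k = 2 - 2 * (1/2:ℝ)^t := by
      rw [geom_sum_eq (by norm_num)]
      field_simp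
      ring
    have h2 : ∑ k ∈ (Finset.range t).erase 0, (1/2 : ℝ) ^ k
        = (∑ k ∈ Finset.range t, (1/2 : ℝ) ^ k) - 1 := by
      have := Finset.add_sum_erase (Finset.range t) (fun k => (1/2:ℝ)^k)
        (Finset.mem_range.2 ht0)
      simp only [pow_zero] at this
      linarith
    have h3 : (0:ℝ) < (1/2:ℝ)^t := by positivity
    rw [h2, h1]; linarith
  have hle1 : ∑ k ∈ (Finset.univ.erase T).image d, (1/2 : ℝ) ^ k
      ≤ ∑ k ∈ (Finset.range t).erase 0, (1/2 : ℝ) ^ k :=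
    Finset.sum_le_sum_of_subset_of_nonneg hsub (fun k _ _ => by positivity)
  nlinarith [hTle, hsum2, himg, hle1, hgeom, hpos]

lemma top_max (t : ℕ) (ht : 2 ≤ t) (a : Fin t → ℝ) (b : Fin t → ℂ)
    (ha : StrictMono a) (wmax : ℝ)
    (hwmax : IsGreatest ({w | ∃ j k : Fin t, j ≠ k ∧
      (∀ i : Fin t, a i * w + (b i).re ≤ a j * w + (b j).re) ∧
      a j * w + (b j).re = a k * w + (b k).re} : Set ℝ) wmax)
    (j : Fin t) :
    a j * wmax + (b j).re ≤ a ⟨t-1, by omega⟩ * wmax + (b ⟨t-1, by omega⟩).re := by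
  set T : Fin t := ⟨t-1, by omega⟩ with hT
  by_contra hcon
  push_neg at hcon
  have hjT : j ≠ T := by rintro rfl; exact lt_irrefl _ hcon
  have hjmem : j ∈ Finset.univ.erase T := Finset.mem_erase.2 ⟨hjT, Finset.mem_univ j⟩
  have hne : (Finset.univ.erase T).Nonempty := ⟨j, hjmem⟩
  have haT : ∀ i ∈ Finset.univ.erase T, a i < a T := by
    intro i hi
    have hiT : i ≠ T := Finset.ne_of_mem_erase hi
    have hik : i.val < t - 1 := by
      have h1 := i.isLt
      by_contra hge
      exact hiT (Fin.ext (show i.val = t - 1 by omega))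
    exact ha (show i < T from hik)
  set χ : ℝ → ℝ := fun w =>
    (Finset.univ.erase T).sup' hne (fun i => a i * w + (b i).re) - (a T * w + (b T).re) with hχ
  have hcont : Continuous χ := by
    apply Continuous.sub
    · exact Continuous.finset_sup'_apply hne (fun i _ => by fun_prop)
    · fun_prop
  have hχmax : 0 < χ wmax := by
    have h1 : a j * wmax + (b j).re
        ≤ (Finset.univ.erase T).sup' hne (fun i => a i * wmax + (b i).re) :=
      Finset.le_sup' (fun i => a i * wmax + (b i).re) hjmem
    simp only [hχ]
    linarith
  set S : ℝ := (Finset.univ.erase T).sup' hne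
    (fun i => ((b i).re - (b T).re) / (a T - a i)) with hS
  set v : ℝ := 1 + max wmax S with hv
  have hwv : wmax ≤ v := by
    have := le_max_left wmax S
    rw [hv]; linarith
  have hχv : χ v < 0 := by
    have hall : ∀ i ∈ Finset.univ.erase T,
        a i * v + (b i).re < a T * v + (b T).re := by
      intro i hi
      have hai : a i < a T := haT i hi
      have hvi : ((b i).re - (b T).re) / (a T - a i) < v := by
        have h1 : ((b i).re - (b T).re) / (a T - a i) ≤ S :=
          Finset.le_sup' (fun i => ((b i).re - (b T).re) / (a T - a i)) hi
        have h2 := le_max_right wmax S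
        rw [hv]; linarith
      have := (div_lt_iff₀ (by linarith : (0:ℝ) < a T - a i)).1 hvi
      nlinarith
    have hsup : (Finset.univ.erase T).sup' hne (fun i => a i * v + (b i).re)
        < a T * v + (b T).re := Finset.sup'_lt_iff hne |>.2 hall
    simp only [hχ]; linarith
  have h0mem : (0:ℝ) ∈ χ '' Set.Icc wmax v :=
    intermediate_value_Icc' hwv hcont.continuousOn ⟨hχv.le, hχmax.le⟩
  obtain ⟨w', hw'mem, hw'0⟩ := h0mem
  have hw'ne : w' ≠ wmax := fun h => by rw [h] at hw'0; linarith
  have hw'gt : wmax < w' := lt_of_le_of_ne hw'mem.1 (Ne.symm hw'ne)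
  obtain ⟨k, hk, hkeq⟩ := Finset.exists_mem_eq_sup' hne (fun i => a i * w' + (b i).re)
  have hkT : k ≠ T := Finset.ne_of_mem_erase hk
  have hχ0 : (Finset.univ.erase T).sup' hne (fun i => a i * w' + (b i).re)
      = a T * w' + (b T).re := by
    simp only [hχ] at hw'0; linarith
  have hmem : w' ∈ ({w | ∃ j k : Fin t, j ≠ k ∧
      (∀ i : Fin t, a i * w + (b i).re ≤ a j * w + (b j).re) ∧
      a j * w + (b j).re = a k * w + (b k).re} : Set ℝ) := by
    refine ⟨T, k, hkT.symm, ?_, by rw [← hχ0, hkeq]⟩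
    intro i
    by_cases hiT : i = T
    · subst hiT; exact le_refl _
    · have h1 : a i * w' + (b i).re
          ≤ (Finset.univ.erase T).sup' hne (fun i => a i * w' + (b i).re) :=
        Finset.le_sup' (fun i => a i * w' + (b i).re)
          (Finset.mem_erase.2 ⟨hiT, Finset.mem_univ i⟩)
      rwa [hχ0] at h1
  exact absurd (hwmax.2 hmem) (not_le.2 hw'gt)

lemma bot_min (t : ℕ) (ht : 2 ≤ t) (a : Fin t → ℝ) (b : Fin t → ℂ)
    (ha : StrictMono a) (wmin : ℝ)
    (hwmin : IsLeast ({w | ∃ j k : Fin t, j ≠ k ∧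
      (∀ i : Fin t, a i * w + (b i).re ≤ a j * w + (b j).re) ∧
      a j * w + (b j).re = a k * w + (b k).re} : Set ℝ) wmin)
    (j : Fin t) :
    a j * wmin + (b j).re ≤ a ⟨0, by omega⟩ * wmin + (b ⟨0, by omega⟩).re := by
  set T : Fin t := ⟨0, by omega⟩ with hT
  by_contra hcon
  push_neg at hcon
  have hjT : j ≠ T := by rintro rfl; exact lt_irrefl _ hcon
  have hjmem : j ∈ Finset.univ.erase T := Finset.mem_erase.2 ⟨hjT, Finset.mem_univ j⟩
  have hne : (Finset.univ.erase T).Nonempty := ⟨j, hjmem⟩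
  have haT : ∀ i ∈ Finset.univ.erase T, a T < a i := by
    intro i hi
    have hiT : i ≠ T := Finset.ne_of_mem_erase hi
    have hik : 0 < i.val := by
      by_contra hge
      exact hiT (Fin.ext (show i.val = 0 by omega))
    exact ha (show T < i from hik)
  set χ : ℝ → ℝ := fun w =>
    (Finset.univ.erase T).sup' hne (fun i => a i * w + (b i).re) - (a T * w + (b T).re) with hχ
  have hcont : Continuous χ := by
    apply Continuous.sub
    · exact Continuous.finset_sup'_apply hne (fun i _ => by fun_prop)
    · fun_prop
  have hχmax : 0 < χ wmin := by
    have h1 : a j * wmin + (b j).re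
        ≤ (Finset.univ.erase T).sup' hne (fun i => a i * wmin + (b i).re) :=
      Finset.le_sup' (fun i => a i * wmin + (b i).re) hjmem
    simp only [hχ]
    linarith
  set S : ℝ := (Finset.univ.erase T).inf' hne
    (fun i => ((b T).re - (b i).re) / (a i - a T)) with hS
  set v : ℝ := min wmin S - 1 with hv
  have hwv : v ≤ wmin := by
    have := min_le_left wmin S
    rw [hv]; linarith
  have hχv : χ v < 0 := by
    have hall : ∀ i ∈ Finset.univ.erase T,
        a i * v + (b i).re < a T * v + (b T).re := by
      intro i hi
      have hai : a T < a i := haT i hi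
      have hvi : v < ((b T).re - (b i).re) / (a i - a T) := by
        have h1 : S ≤ ((b T).re - (b i).re) / (a i - a T) :=
          Finset.inf'_le (fun i => ((b T).re - (b i).re) / (a i - a T)) hi
        have h2 := min_le_right wmin S
        rw [hv]; linarith
      have := (lt_div_iff₀ (by linarith : (0:ℝ) < a i - a T)).1 hvi
      nlinarith
    have hsup : (Finset.univ.erase T).sup' hne (fun i => a i * v + (b i).re)
        < a T * v + (b T).re := Finset.sup'_lt_iff hne |>.2 hall
    simp only [hχ]; linarith
  have h0mem : (0:ℝ) ∈ χ '' Set.Icc v wmin :=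
    intermediate_value_Icc hwv hcont.continuousOn ⟨hχv.le, hχmax.le⟩
  obtain ⟨w', hw'mem, hw'0⟩ := h0mem
  have hw'ne : w' ≠ wmin := fun h => by rw [h] at hw'0; linarith
  have hw'lt : w' < wmin := lt_of_le_of_ne hw'mem.2 hw'ne
  obtain ⟨k, hk, hkeq⟩ := Finset.exists_mem_eq_sup' hne (fun i => a i * w' + (b i).re)
  have hkT : k ≠ T := Finset.ne_of_mem_erase hk
  have hχ0 : (Finset.univ.erase T).sup' hne (fun i => a i * w' + (b i).re)
      = a T * w' + (b T).re := by
    simp only [hχ] at hw'0; linarith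
  have hmem : w' ∈ ({w | ∃ j k : Fin t, j ≠ k ∧
      (∀ i : Fin t, a i * w + (b i).re ≤ a j * w + (b j).re) ∧
      a j * w + (b j).re = a k * w + (b k).re} : Set ℝ) := by
    refine ⟨T, k, hkT.symm, ?_, by rw [← hχ0, hkeq]⟩
    intro i
    by_cases hiT : i = T
    · subst hiT; exact le_refl _
    · have h1 : a i * w' + (b i).re
          ≤ (Finset.univ.erase T).sup' hne (fun i => a i * w' + (b i).re) :=
        Finset.le_sup' (fun i => a i * w' + (b i).re)
          (Finset.mem_erase.2 ⟨hiT, Finset.mem_univ i⟩)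
      rwa [hχ0] at h1
  exact absurd (hwmin.2 hmem) (not_le.2 hw'lt)

/-- the real part of every complex root of `g` lies in the open interval
`(min Trop(g) - log 2/δ(g), max Trop(g) + log 2/δ(g))`. -/
theorem re_root_mem_Ioo (t : ℕ) (ht : 2 ≤ t) (a : Fin t → ℝ) (b : Fin t → ℂ)
    (ha : StrictMono a) (δ : ℝ)
    (hδ : IsLeast {d : ℝ | ∃ p q : Fin t, p ≠ q ∧ d = |a p - a q|} δ)
    (wmin wmax : ℝ) (hwmin : IsLeast (Trop t a b) wmin)
    (hwmax : IsGreatest (Trop t a b) wmax)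
    (ζ : ℂ) (hζ : ∑ j, Complex.exp (a j * ζ + b j) = 0) :
    ζ.re ∈ Set.Ioo (wmin - Real.log 2 / δ) (wmax + Real.log 2 / δ) := by
  have hδpos : 0 < δ := by
    obtain ⟨p, q, hpq, hd⟩ := hδ.1
    have : a p ≠ a q := fun h => hpq (ha.injective h)
    rw [hd]
    exact abs_pos.2 (sub_ne_zero.2 this)
  have hlog2 : 0 ≤ Real.log 2 := Real.log_nonneg (by norm_num)
  constructor
  · -- lower bound
    by_contra hcontra
    push_neg at hcontra
    set T : Fin t := ⟨0, by omega⟩ with hT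
    refine key_lemma t a b ζ hζ T (fun j => j.val) Fin.val_injective rfl (fun j => j.isLt) ?_
    intro j
    set n : ℕ := j.val with hn
    have gap : (n : ℝ) * δ ≤ a j - a T :=
      gap_lemma t a ha δ hδ.2 n T j (by simp [hT, hn])
    have hre : Real.log 2 / δ ≤ wmin - ζ.re := by linarith
    have h0 : (0:ℝ) ≤ (n:ℝ) * δ := by positivity
    have key1 : ((n:ℝ)*δ) * (Real.log 2/δ) ≤ (a j - a T) * (wmin - ζ.re) :=
      mul_le_mul gap hre (by positivity) (by linarith)
    have key2 : ((n:ℝ)*δ) * (Real.log 2/δ) = n * Real.log 2 := by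
      field_simp
    have hmax := bot_min t ht a b ha wmin hwmin j
    nlinarith [key1, key2, hmax]
  · -- upper bound
    by_contra hcontra
    push_neg at hcontra
    set T : Fin t := ⟨t-1, by omega⟩ with hT
    refine key_lemma t a b ζ hζ T (fun j => t - 1 - j.val) ?_ (by simp [hT]) ?_ ?_
    · intro x y hxy
      have hx := x.isLt; have hy := y.isLt
      exact Fin.ext (by simp at hxy; omega)
    · intro j; show t - 1 - j.val < t; omega
    · intro j
      set n : ℕ := t - 1 - j.val with hn
      have gap : (n : ℝ) * δ ≤ a T - a j :=
      gap_lemma t a ha δ hδ.2 n j T (by simp [hT, hn]; omega)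
      have hre : Real.log 2 / δ ≤ ζ.re - wmax := by linarith
      have h0 : (0:ℝ) ≤ (n:ℝ) * δ := by positivity
      have key1 : ((n:ℝ)*δ) * (Real.log 2/δ) ≤ (a T - a j) * (ζ.re - wmax) :=
        mul_le_mul gap hre (by positivity) (by linarith)
      have key2 : ((n:ℝ)*δ) * (Real.log 2/δ) = n * Real.log 2 := by
        field_simp
      have hmax := top_max t ht a b ha wmax hwmax j
      nlinarith [key1, key2, hmax]
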